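/- Let h, k, p, q be real numbers with 0 < p < h and 0 < q < k. Set v₀ = (q²k + 2kh² - hpq)/(2k²h - kpq + hp²), W = 4k²h² + (hp - qk)², g(v) = -p²v² + (4kh - 2pq)v - q², and f(v) = g(v)/((kv + h) + √((kv - h)² + (vp + q)²))². Then f(v₀) = 4kh(kh - pq)/(√W + ph + qk)². -/

import Mathlib

theorem f_at_critical_point (h k p q : ℝ)
    (hp : 0 < p) (hph : p < h) (hq : 0 < q) (hqk : q < k)
    (g f : ℝ → ℝ)
    (hg : ∀ v, g v = -p^2 * v^2 + (4*k*h - 2*p*q) * v - q^2)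
    (hf : ∀ v, f v = g v / ((k*v + h) + Real.sqrt ((k*v - h)^2 + (v*p + q)^2))^2)
    (v₀ W : ℝ)
    (hv₀ : v₀ = (q^2*k + 2*k*h^2 - h*p*q) / (2*k^2*h - k*p*q + h*p^2))
    (hW : W = 4*k^2*h^2 + (h*p - q*k)^2) :
    f v₀ = 4*k*h*(k*h - p*q) / (Real.sqrt W + p*h + q*k)^2 := by
  have hh : 0 < h := hp.trans hph
  have hk : 0 < k := hq.trans hqk
  have hkh : p * q < k * h := by nlinarith
  have hD : 0 < 2*k^2*h - k*p*q + h*p^2 := by nlinarith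
  have hDne : (2*k^2*h - k*p*q + h*p^2) ≠ 0 := ne_of_gt hD
  have hWpos : 0 < W := by
    rw [hW]; nlinarith [sq_nonneg (h*p - q*k), mul_pos (mul_pos hk hh) (mul_pos hk hh)]
  set s := Real.sqrt W with hsdef
  have hs2 : s ^ 2 = W := Real.sq_sqrt hWpos.le
  have hspos : 0 < s := Real.sqrt_pos.mpr hWpos
  have hphqk : 0 < p*h + q*k := by nlinarith [mul_pos hp hh, mul_pos hq hk]
  have hc : 0 < (p*h + q*k) / (2*k^2*h - k*p*q + h*p^2) := div_pos hphqk hD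
  have h1 : (k*v₀ - h)^2 + (v₀*p + q)^2
      = ((p*h + q*k) / (2*k^2*h - k*p*q + h*p^2))^2 * W := by
    rw [hv₀, hW]; field_simp [show k * (k * 2 * h - q * p) + h * p ^ 2 ≠ 0 by convert hDne using 1; ring]; ring
  have hsqrt : Real.sqrt ((k*v₀ - h)^2 + (v₀*p + q)^2)
      = (p*h + q*k) / (2*k^2*h - k*p*q + h*p^2) * s := by
    rw [h1, Real.sqrt_mul (sq_nonneg _), Real.sqrt_sq hc.le]
  have h2 : k*v₀ + h = W / (2*k^2*h - k*p*q + h*p^2) := by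
    rw [hv₀, hW]; field_simp [show k * (k * 2 * h - q * p) + h * p ^ 2 ≠ 0 by convert hDne using 1; ring]; ring
  have h3 : g v₀ = 4*k*h*(k*h - p*q) * W / (2*k^2*h - k*p*q + h*p^2)^2 := by
    rw [hg, hv₀, hW]; field_simp [show k * (k * 2 * h - p * q) + p ^ 2 * h ≠ 0 by convert hDne using 1; ring]; ring
  have hden : 0 < s + p*h + q*k := by nlinarith
  have hsne : s ≠ 0 := ne_of_gt hspos
  have hdne : s + p*h + q*k ≠ 0 := ne_of_gt hden
  have e1 : (k*v₀ + h) + Real.sqrt ((k*v₀ - h)^2 + (v₀*p + q)^2)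
      = s * (s + p*h + q*k) / (2*k^2*h - k*p*q + h*p^2) := by
    rw [h2, hsqrt, ← hs2]; field_simp; ring
  rw [hf, h3, e1, ← hs2]
  have d1 : (s * (s + p*h + q*k) / (2*k^2*h - k*p*q + h*p^2))^2 ≠ 0 :=
    pow_ne_zero _ (div_ne_zero (mul_ne_zero hsne hdne) hDne)
  have d2 : (s + p*h + q*k)^2 ≠ 0 := pow_ne_zero _ hdne
  rw [div_eq_div_iff d1 d2]
  field_simp
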